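/- For m ∈ ℕ define P_m = Σ (min(⌊j0/3⌋, ⌊(j2 − j0)/3⌋ + ⌊j0/3⌋) + 1)·(j1 + 1)·x1^{j1} x2^{j2}, the sum being over all (j0, j1, j2) ∈ ℕ³ with j0 + 3j1 + j2 = m, where min is taken in ℤ. Then in R[[t]] one has (Σ_{m=0}^∞ P_m t^m) · (1 − t³)(1 − t³·x1)²(1 − t·x2)(1 − t²·x2) = 1. -/

import Mathlib

open scoped BigOperators

open Finset PowerSeries
noncomputable section
namespace Stmt5Aux
abbrev RR := MvPolynomial (Fin 2) ℚ
def x0 : RR := MvPolynomial.X 0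
def x1 : RR := MvPolynomial.X 1
def cc (j0 j2 : ℕ) : ℤ :=
  min (Int.fdiv (j0:ℤ) 3) (Int.fdiv ((j2:ℤ) - (j0:ℤ)) 3 + Int.fdiv (j0:ℤ) 3) + 1
lemma cc_zero (n : ℕ) : cc n 0 = if 3 ∣ n then 1 else 0 := by
  unfold cc
  rw [Int.fdiv_eq_ediv_of_nonneg _ (by norm_num), Int.fdiv_eq_ediv_of_nonneg _ (by norm_num)]
  split_ifs with h <;> omega
lemma cc_step (j0 j2 : ℕ) (h : 1 ≤ j2) :
    cc j0 j2 - cc j0 (j2 - 1) = if 3 ∣ (j0 + 2*j2) ∧ j2 ≤ j0 then 1 else 0 := by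
  unfold cc
  rw [Int.fdiv_eq_ediv_of_nonneg _ (by norm_num), Int.fdiv_eq_ediv_of_nonneg _ (by norm_num),
    Int.fdiv_eq_ediv_of_nonneg _ (by norm_num)]
  split_ifs with hc <;> omega

def S (s : ℕ) : RR := ∑ j2 ∈ range (s+1), (cc (s - j2) j2 : RR) * x1 ^ j2
def T (s : ℕ) : RR := ∑ j2 ∈ range (s+1), if 2*j2 ≤ s ∧ 3 ∣ (s + j2) then x1 ^ j2 else 0
def U (s : ℕ) : RR := if 3 ∣ s then 1 else 0

lemma S_zero : S 0 = T 0 := by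
  simp [S, T, cc]

lemma S_step (m : ℕ) : S (m+1) - x1 * S m = T (m+1) := by
  unfold S T
  rw [Finset.mul_sum,
    Finset.sum_range_succ' (fun j2 => (cc (m+1-j2) j2 : RR) * x1 ^ j2) (m+1),
    Finset.sum_range_succ' (fun j2 => if 2*j2 ≤ m+1 ∧ 3 ∣ (m+1+j2) then x1 ^ j2 else 0) (m+1),
    add_sub_right_comm, ← Finset.sum_sub_distrib]
  congr 1
  · apply Finset.sum_congr rfl
    intro i hi
    rw [Finset.mem_range] at hi
    have h1 : m + 1 - (i+1) = m - i := by omega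
    rw [h1]
    have h2 : x1 * ((cc (m - i) i : RR) * x1 ^ i) = (cc (m-i) i : RR) * x1 ^ (i+1) := by
      rw [pow_succ]; ring
    rw [h2, ← sub_mul]
    have h3 : (cc (m-i) (i+1) : RR) - (cc (m-i) i : RR)
        = ((cc (m-i) (i+1) - cc (m-i) (i+1-1) : ℤ) : RR) := by push_cast; norm_num
    rw [h3, cc_step _ _ (by omega)]
    by_cases hc : 3 ∣ (m - i + 2*(i+1)) ∧ i + 1 ≤ m - i
    · rw [if_pos hc, if_pos (by omega)]; simp
    · rw [if_neg hc, if_neg (by omega)]; simp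
  · rw [cc_zero]
    by_cases h : 3 ∣ (m + 1)
    · rw [if_pos (by omega), if_pos (by omega)]; simp
    · rw [if_neg (by omega), if_neg (by omega)]; simp
lemma T_step (m : ℕ) : T (m+2) - x1 * T m = U (m+2) := by
  unfold T U
  rw [Finset.mul_sum, Finset.sum_range_succ
      (fun j2 => if 2*j2 ≤ m+2 ∧ 3 ∣ (m+2+j2) then x1 ^ j2 else 0) (m+2),
    if_neg (by omega), add_zero,
    Finset.sum_range_succ' (fun j2 => if 2*j2 ≤ m+2 ∧ 3 ∣ (m+2+j2) then x1 ^ j2 else 0) (m+1),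
    add_sub_right_comm, ← Finset.sum_sub_distrib]
  have : ∀ i ∈ Finset.range (m+1),
      (if 2*(i+1) ≤ m+2 ∧ 3 ∣ (m+2+(i+1)) then x1 ^ (i+1) else 0)
        - x1 * (if 2*i ≤ m ∧ 3 ∣ (m+i) then x1 ^ i else 0) = 0 := by
    intro i hi
    by_cases hc : 2*i ≤ m ∧ 3 ∣ (m+i)
    · rw [if_pos (by omega), if_pos hc, pow_succ]; ring
    · rw [if_neg (by omega), if_neg hc]; simp
  rw [Finset.sum_congr rfl this, Finset.sum_const_zero, zero_add]
  by_cases h : 3 ∣ (m + 2)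
  · rw [if_pos (by omega), if_pos h]; simp
  · rw [if_neg (by omega), if_neg h]
lemma peel (f : ℕ → RR) (u : RR) (k n : ℕ) :
    PowerSeries.coeff n (PowerSeries.mk f * (1 - PowerSeries.C u * PowerSeries.X ^ k)) =
      f n - (if k ≤ n then u * f (n - k) else 0) := by
  rw [mul_sub, mul_one, map_sub, coeff_mk]
  congr 1
  rw [show PowerSeries.mk f * (PowerSeries.C u * PowerSeries.X ^ k)
      = (PowerSeries.C u * PowerSeries.mk f) * PowerSeries.X ^ k by ring,
    PowerSeries.coeff_mul_X_pow']
  split_ifs with h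
  · rw [PowerSeries.coeff_C_mul, coeff_mk]
  · rfl

lemma B1 : PowerSeries.mk S * (1 - PowerSeries.C x1 * PowerSeries.X) = PowerSeries.mk T := by
  refine PowerSeries.ext fun n => ?_
  rw [show (PowerSeries.X : RR⟦X⟧) = PowerSeries.X ^ 1 by rw [pow_one], peel, coeff_mk]
  rcases n with _ | m
  · simpa using S_zero
  · rw [if_pos (by omega)]
    simpa using S_step m

lemma B2 : PowerSeries.mk T * (1 - PowerSeries.C x1 * PowerSeries.X ^ 2)
    = PowerSeries.mk U := by
  refine PowerSeries.ext fun n => ?_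
  rw [peel, coeff_mk]
  match n with
  | 0 => simp [T, U]
  | 1 =>
    rw [if_neg (by omega), sub_zero]
    norm_num [T, U, Finset.sum_range_succ]
  | (m+2) =>
    rw [if_pos (by omega)]
    simpa using T_step m

lemma B3 : PowerSeries.mk U * (1 - PowerSeries.X ^ 3) = 1 := by
  have h1 : (1 - PowerSeries.X ^ 3 : RR⟦X⟧)
      = 1 - PowerSeries.C 1 * PowerSeries.X ^ 3 := by simp
  refine PowerSeries.ext fun n => ?_
  rw [h1, peel, PowerSeries.coeff_one]
  unfold U
  split_ifs <;> simp_all <;> omega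

def Hc (a : ℕ) : RR := if 3 ∣ a then ((a/3 + 1 : ℕ) : RR) * x0 ^ (a/3) else 0
def Gc (a : ℕ) : RR := if 3 ∣ a then x0 ^ (a/3) else 0

lemma H1 : PowerSeries.mk Hc * (1 - PowerSeries.C x0 * PowerSeries.X ^ 3)
    = PowerSeries.mk Gc := by
  refine PowerSeries.ext fun n => ?_
  rw [peel, coeff_mk]
  unfold Hc Gc
  by_cases h : 3 ∣ n
  · obtain ⟨k, rfl⟩ := h
    rcases k with _ | m
    · simp
    · rw [if_pos (by omega), if_pos (by omega), if_pos (by omega), if_pos (by omega)]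
      have h1 : 3 * (m+1) / 3 = m + 1 := by omega
      have h2 : (3 * (m+1) - 3) / 3 = m := by omega
      rw [h1, h2]
      push_cast
      rw [pow_succ]
      ring
  · rw [if_neg h, if_neg h]
    by_cases h1 : 3 ≤ n
    · rw [if_pos h1, if_neg (show ¬ 3 ∣ (n-3) by omega)]; simp
    · rw [if_neg h1]; simp

lemma H2 : PowerSeries.mk Gc * (1 - PowerSeries.C x0 * PowerSeries.X ^ 3) = 1 := by
  refine PowerSeries.ext fun n => ?_
  rw [peel, PowerSeries.coeff_one]
  unfold Gc
  by_cases h : 3 ∣ n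
  · obtain ⟨k, rfl⟩ := h
    rcases k with _ | m
    · simp
    · rw [if_pos (by omega), if_pos (by omega), if_pos (by omega), if_neg (by omega)]
      have h1 : 3 * (m+1) / 3 = m + 1 := by omega
      have h2 : (3 * (m+1) - 3) / 3 = m := by omega
      rw [h1, h2, pow_succ]
      ring
  · have hz : ¬ (n = 0) := by omega
    rw [if_neg h, if_neg hz]
    by_cases h1 : 3 ≤ n
    · rw [if_pos h1, if_neg (show ¬ 3 ∣ (n-3) by omega)]; simp
    · rw [if_neg h1]; simp
lemma A_eq (n : ℕ) :
    (∑ j ∈ (Finset.range (n + 1) ×ˢ Finset.range (n + 1) ×ˢ Finset.range (n + 1)).filter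
        (fun j => j.1 + 3 * j.2.1 + j.2.2 = n),
      (((min (Int.fdiv (j.1 : ℤ) 3)
            (Int.fdiv ((j.2.2 : ℤ) - (j.1 : ℤ)) 3 + Int.fdiv (j.1 : ℤ) 3) + 1) *
          ((j.2.1 : ℤ) + 1) : ℤ) : RR) *
        MvPolynomial.X 0 ^ j.2.1 * MvPolynomial.X 1 ^ j.2.2)
    = PowerSeries.coeff n (PowerSeries.mk Hc * PowerSeries.mk S) := by
  rw [PowerSeries.coeff_mul, Finset.Nat.sum_antidiagonal_eq_sum_range_succ_mk]
  simp only [PowerSeries.coeff_mk]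
  simp only [Hc, ite_mul, zero_mul]
  rw [← Finset.sum_filter]
  have hexp : ∀ a ∈ (Finset.range (n+1)).filter (fun a => 3 ∣ a),
      ((a/3 + 1 : ℕ) : RR) * x0 ^ (a/3) * S (n - a)
        = ∑ j2 ∈ Finset.range (n - a + 1),
            ((a/3 + 1 : ℕ) : RR) * x0 ^ (a/3) * ((cc (n - a - j2) j2 : RR) * x1 ^ j2) := by
    intro a _
    rw [S, Finset.mul_sum]
  rw [Finset.sum_congr rfl hexp, Finset.sum_sigma']
  refine Finset.sum_nbij' (i := fun j => (⟨3 * j.2.1, j.2.2⟩ : Σ _ : ℕ, ℕ))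
    (j := fun p => (n - p.1 - p.2, p.1 / 3, p.2)) ?_ ?_ ?_ ?_ ?_
  · intro j hj
    simp only [Finset.mem_filter, Finset.mem_product, Finset.mem_range] at hj
    simp only [Finset.mem_sigma, Finset.mem_filter, Finset.mem_range]
    refine ⟨⟨by omega, ⟨j.2.1, rfl⟩⟩, by omega⟩
  · intro p hp
    simp only [Finset.mem_sigma, Finset.mem_filter, Finset.mem_range] at hp
    obtain ⟨⟨h1, h2⟩, h3⟩ := hp
    simp only [Finset.mem_filter, Finset.mem_product, Finset.mem_range]
    omega
  · intro j hj
    simp only [Finset.mem_filter, Finset.mem_product, Finset.mem_range] at hj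
    have : 3 * j.2.1 / 3 = j.2.1 := by omega
    ext <;> simp [this] <;> omega
  · intro p hp
    simp only [Finset.mem_sigma, Finset.mem_filter, Finset.mem_range] at hp
    obtain ⟨⟨h1, h2⟩, h3⟩ := hp
    have : 3 * (p.1 / 3) = p.1 := by omega
    simp [this]
  · intro j hj
    simp only [Finset.mem_filter, Finset.mem_product, Finset.mem_range] at hj
    have h3 : 3 * j.2.1 / 3 = j.2.1 := by omega
    have h4 : n - 3 * j.2.1 - j.2.2 = j.1 := by omega
    simp only [h3, h4]
    rw [show (cc j.1 j.2.2 : RR)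
        = ((min (Int.fdiv (j.1 : ℤ) 3)
            (Int.fdiv ((j.2.2 : ℤ) - (j.1 : ℤ)) 3 + Int.fdiv (j.1 : ℤ) 3) + 1 : ℤ) : RR) from rfl]
    push_cast
    unfold x0 x1
    ring

end Stmt5Aux
open Stmt5Aux

/-- Over `R = ℚ[x1,x2]`, with
`P_m = ∑ (min(⌊j0/3⌋, ⌊(j2-j0)/3⌋+⌊j0/3⌋) + 1)·(j1+1)·x1^j1 x2^j2`, summed over
`(j0,j1,j2) ∈ ℕ³` with `j0+3j1+j2 = m` (min taken in `ℤ`, floors as `Int.fdiv`), we have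
`(∑_m P_m t^m)·(1-t³)(1-t³·x1)²(1-t·x2)(1-t²·x2) = 1` in `R[[t]]`. -/
theorem stmt_5 :
    (PowerSeries.mk (fun m : ℕ =>
      ∑ j ∈ (Finset.range (m + 1) ×ˢ Finset.range (m + 1) ×ˢ Finset.range (m + 1)).filter
          (fun j => j.1 + 3 * j.2.1 + j.2.2 = m),
        (((min (Int.fdiv (j.1 : ℤ) 3)
              (Int.fdiv ((j.2.2 : ℤ) - (j.1 : ℤ)) 3 + Int.fdiv (j.1 : ℤ) 3) + 1) *
            ((j.2.1 : ℤ) + 1) : ℤ) : MvPolynomial (Fin 2) ℚ) *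
          MvPolynomial.X 0 ^ j.2.1 * MvPolynomial.X 1 ^ j.2.2)) *
      ((1 - PowerSeries.X ^ 3) *
        (1 - PowerSeries.C (MvPolynomial.X 0 : MvPolynomial (Fin 2) ℚ) * PowerSeries.X ^ 3) ^ 2 *
        (1 - PowerSeries.C (MvPolynomial.X 1 : MvPolynomial (Fin 2) ℚ) * PowerSeries.X) *
        (1 - PowerSeries.C (MvPolynomial.X 1 : MvPolynomial (Fin 2) ℚ) * PowerSeries.X ^ 2)) =
      1 := by
  have hA : (PowerSeries.mk (fun m : ℕ =>
      ∑ j ∈ (Finset.range (m + 1) ×ˢ Finset.range (m + 1) ×ˢ Finset.range (m + 1)).filter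
          (fun j => j.1 + 3 * j.2.1 + j.2.2 = m),
        (((min (Int.fdiv (j.1 : ℤ) 3)
              (Int.fdiv ((j.2.2 : ℤ) - (j.1 : ℤ)) 3 + Int.fdiv (j.1 : ℤ) 3) + 1) *
            ((j.2.1 : ℤ) + 1) : ℤ) : MvPolynomial (Fin 2) ℚ) *
          MvPolynomial.X 0 ^ j.2.1 * MvPolynomial.X 1 ^ j.2.2))
      = PowerSeries.mk Hc * PowerSeries.mk S := by
    refine PowerSeries.ext fun n => ?_
    rw [PowerSeries.coeff_mk]
    exact A_eq n
  rw [hA]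
  have hx0 : (MvPolynomial.X 0 : MvPolynomial (Fin 2) ℚ) = x0 := rfl
  have hx1 : (MvPolynomial.X 1 : MvPolynomial (Fin 2) ℚ) = x1 := rfl
  rw [hx0, hx1]
  have key : (PowerSeries.mk Hc * PowerSeries.mk S) *
      ((1 - PowerSeries.X ^ 3) *
        (1 - PowerSeries.C x0 * PowerSeries.X ^ 3) ^ 2 *
        (1 - PowerSeries.C x1 * PowerSeries.X) *
        (1 - PowerSeries.C x1 * PowerSeries.X ^ 2))
      = ((PowerSeries.mk Hc * (1 - PowerSeries.C x0 * PowerSeries.X ^ 3)) *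
          (1 - PowerSeries.C x0 * PowerSeries.X ^ 3)) *
        ((((PowerSeries.mk S * (1 - PowerSeries.C x1 * PowerSeries.X)) *
          (1 - PowerSeries.C x1 * PowerSeries.X ^ 2))) *
          (1 - PowerSeries.X ^ 3)) := by ring
  rw [key, H1, B1, H2, B2, B3, one_mul]
end
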